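/- arXiv:0904.4027 — 4 statements merged into one kernel-verified Lean document; each statement's English description precedes it below -/
import Mathlib

section
/- Let n ≥ 1 be an integer, x_1, …, x_n > 0, and p_1, …, p_n ≥ 0 with p_1 + ⋯ + p_n = 1. If either (β > 0 and α ≤ 0) or (β ≥ 1 and α ≤ 1/2), then (∏_{k=1}^n Γ(x_k + β)^{p_k}) / Γ(∑_{k=1}^n p_k x_k + β) ≥ (∏_{k=1}^n x_k^{p_k (x_k + β − α)}) / (∑_{k=1}^n p_k x_k)^{∑_{k=1}^n p_k x_k + β − α}. -/
open Real Finset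

lemma keyineq (α β x : ℝ) (hx : 0 < x)
    (hcond : (0 < β ∧ α ≤ 0) ∨ (1 ≤ β ∧ α ≤ 1 / 2)) :
    1/x ≤ 1/(x+β) + 1/(2*(x+β)^2) + (β-α)/x^2 := by
  rcases hcond with ⟨hβ, hα⟩ | ⟨hβ, hα⟩
  · have ht : 0 < x + β := by linarith
    have h1 : 1/(x+β) + β/x^2 - 1/x = β^2/(x^2*(x+β)) := by field_simp; ring
    have h2 : 0 ≤ β^2/(x^2*(x+β)) := by positivity
    have h3 : β/x^2 ≤ (β-α)/x^2 := by
      apply div_le_div_of_nonneg_right (by linarith) (by positivity)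
    have h4 : 0 ≤ 1/(2*(x+β)^2) := by positivity
    linarith
  · have ht : 0 < x + β := by linarith
    have h1 : 1/(x+β) + 1/(2*(x+β)^2) + (β-1/2)/x^2 - 1/x
        = β*((2*β-1)*(x+β)-x)/(2*x^2*(x+β)^2) := by field_simp; ring
    have h5 : x + β ≤ (2*β-1)*(x+β) := by nlinarith
    have h2 : 0 ≤ β*((2*β-1)*(x+β)-x)/(2*x^2*(x+β)^2) := by
      apply div_nonneg ?_ (by positivity)
      have : 0 ≤ (2*β-1)*(x+β) - x := by linarith
      nlinarith
    have h3 : (β-1/2)/x^2 ≤ (β-α)/x^2 :=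
      div_le_div_of_nonneg_right (by linarith) (by positivity)
    linarith

lemma teles (t : ℝ) (ht : 0 < t) (m : ℕ) :
    1/t + 1/(2*t^2) - (1/(t+(m+1)) + 1/(2*(t+(m+1))^2))
      ≤ ∑ j ∈ Finset.range (m+1), ((t+j)^2)⁻¹ := by
  have key : ∀ j ∈ Finset.range (m+1),
      (1/(t+j) + 1/(2*(t+j)^2)) - (1/(t+(j+1:ℕ)) + 1/(2*(t+(j+1:ℕ))^2)) ≤ ((t+j)^2)⁻¹ := by
    intro j _
    have hs : (0:ℝ) < t + j := by positivity
    push_cast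
    have hs1 : (0:ℝ) < t + j + 1 := by linarith
    have h1 : (1/(t+j) + 1/(2*(t+j)^2)) - (1/(t+(j+1)) + 1/(2*(t+(j+1))^2))
        = (2*(t+j)^2 + 4*(t+j) + 1)/(2*(t+j)^2*((t+j)+1)^2) := by
      field_simp; ring
    rw [h1]
    rw [div_le_iff₀ (by positivity), ← sub_nonneg]
    have : ((t+j)^2)⁻¹ * (2*(t+j)^2*((t+j)+1)^2) - (2*(t+j)^2 + 4*(t+j) + 1)
        = 2*((t+j)+1)^2 - (2*(t+j)^2 + 4*(t+j) + 1) := by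
      field_simp
    rw [this]; nlinarith
  calc 1/t + 1/(2*t^2) - (1/(t+(m+1)) + 1/(2*(t+(m+1))^2))
      = ∑ j ∈ Finset.range (m+1), ((1/(t+j) + 1/(2*(t+j)^2))
          - (1/(t+(j+1:ℕ)) + 1/(2*(t+(j+1:ℕ))^2))) := by
        rw [Finset.sum_range_sub' (fun j : ℕ => 1/(t+j) + 1/(2*(t+j)^2)) (m+1)]
        push_cast; ring
    _ ≤ _ := Finset.sum_le_sum key

lemma convexE (α β : ℝ) (hcond : (0 < β ∧ α ≤ 0) ∨ (1 ≤ β ∧ α ≤ 1 / 2)) (m : ℕ) :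
    ConvexOn ℝ (Set.Ioi (0:ℝ)) (fun x => x * Real.log m + 3/(4*(m+1)) * x^2
      - x * Real.log x - (β - α) * Real.log x
      - ∑ j ∈ Finset.range (m+1), Real.log (x+β+j)) := by
  have hβ : 0 < β := by rcases hcond with ⟨h, _⟩ | ⟨h, _⟩; exacts [h, by linarith]
  set c : ℝ := 3/(4*(m+1)) with hc
  set E' : ℝ → ℝ := fun y => Real.log m + c*(2*y) - (Real.log y + 1) - (β-α)*y⁻¹
      - ∑ j ∈ Finset.range (m+1), (y+β+j)⁻¹ with hE'
  have hder1 : ∀ y ∈ Set.Ioi (0:ℝ), HasDerivAt (fun x => x * Real.log m + c * x^2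
      - x * Real.log x - (β - α) * Real.log x
      - ∑ j ∈ Finset.range (m+1), Real.log (x+β+j)) (E' y) y := by
    intro y hy
    have hy0 : (0:ℝ) < y := hy
    have hlog : HasDerivAt Real.log y⁻¹ y := Real.hasDerivAt_log hy0.ne'
    have hA : HasDerivAt (fun x:ℝ => x * Real.log ↑m) (1 * Real.log ↑m) y :=
      (hasDerivAt_id y).mul_const _
    have hB : HasDerivAt (fun x:ℝ => c * x^2) (c * (↑2 * y ^ 1)) y :=
      (hasDerivAt_pow 2 y).const_mul c
    have hC : HasDerivAt (fun x:ℝ => x * Real.log x) (1 * Real.log y + y * y⁻¹) y :=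
      (hasDerivAt_id y).mul hlog
    have hD : HasDerivAt (fun x:ℝ => (β - α) * Real.log x) ((β-α) * y⁻¹) y :=
      hlog.const_mul _
    have hS : HasDerivAt (fun x:ℝ => ∑ j ∈ Finset.range (m+1), Real.log (x+β+j))
        (∑ j ∈ Finset.range (m+1), (y+β+j)⁻¹) y := by
      apply HasDerivAt.fun_sum
      intro j _
      have hpos : (0:ℝ) < y + β + j := by positivity
      have h1 : HasDerivAt (fun x:ℝ => x + β + ↑j) 1 y :=
        ((hasDerivAt_id y).add_const β).add_const _
      simpa using h1.log hpos.ne'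
    have := (((hA.add hB).sub hC).sub hD).sub hS
    refine this.congr_deriv ?_
    rw [hE']
    have : y * y⁻¹ = 1 := mul_inv_cancel₀ hy0.ne'
    simp only [pow_one, Nat.cast_ofNat, this]
    ring
  have hder2 : ∀ y ∈ Set.Ioi (0:ℝ), HasDerivAt E'
      (c*2 - 1/y + (β-α)/y^2 + ∑ j ∈ Finset.range (m+1), ((y+β+j)^2)⁻¹) y := by
    intro y hy
    have hy0 : (0:ℝ) < y := hy
    have hlog : HasDerivAt Real.log y⁻¹ y := Real.hasDerivAt_log hy0.ne'
    have hA : HasDerivAt (fun _:ℝ => Real.log ↑m) 0 y := hasDerivAt_const _ _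
    have hB : HasDerivAt (fun x:ℝ => c*(2*x)) (c*(2*1)) y :=
      ((hasDerivAt_id y).const_mul 2).const_mul c
    have hC : HasDerivAt (fun x:ℝ => Real.log x + 1) y⁻¹ y := hlog.add_const 1
    have hD : HasDerivAt (fun x:ℝ => (β-α)*x⁻¹) ((β-α) * (-(y^2)⁻¹)) y :=
      (hasDerivAt_inv hy0.ne').const_mul _
    have hS : HasDerivAt (fun x:ℝ => ∑ j ∈ Finset.range (m+1), (x+β+j)⁻¹)
        (∑ j ∈ Finset.range (m+1), (-1/(y+β+j)^2)) y := by
      apply HasDerivAt.fun_sum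
      intro j _
      have hpos : (0:ℝ) < y + β + j := by positivity
      have h1 : HasDerivAt (fun x:ℝ => x + β + ↑j) 1 y :=
        ((hasDerivAt_id y).add_const β).add_const _
      exact h1.inv hpos.ne'
    have := (((hA.add hB).sub hC).sub hD).sub hS
    refine this.congr_deriv ?_
    simp only [neg_div, one_div, Finset.sum_neg_distrib]
    ring
  have hnonneg : ∀ y ∈ Set.Ioi (0:ℝ),
      0 ≤ c*2 - 1/y + (β-α)/y^2 + ∑ j ∈ Finset.range (m+1), ((y+β+j)^2)⁻¹ := by
    intro y hy
    have hy0 : (0:ℝ) < y := hy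
    have ht : (0:ℝ) < y + β := by linarith
    have htel := teles (y+β) ht m
    have hkey := keyineq α β y hy0 hcond
    have hm1 : (0:ℝ) < (m:ℝ) + 1 := by positivity
    have htail1 : 1/((y+β)+((m:ℝ)+1)) ≤ 1/((m:ℝ)+1) :=
      one_div_le_one_div_of_le hm1 (by linarith)
    have htail2 : 1/(2*((y+β)+((m:ℝ)+1))^2) ≤ 1/(2*((m:ℝ)+1)) := by
      apply one_div_le_one_div_of_le (by positivity)
      nlinarith
    have hc2 : c*2 = 1/((m:ℝ)+1) + 1/(2*((m:ℝ)+1)) := by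
      rw [hc]; field_simp; ring
    have hsum : ∑ j ∈ Finset.range (m+1), (((y+β)+j)^2)⁻¹
        = ∑ j ∈ Finset.range (m+1), ((y+β+j)^2)⁻¹ := by
      apply Finset.sum_congr rfl; intro j _; ring_nf
    linarith [htel, hsum ▸ htel]
  apply convexOn_of_hasDerivWithinAt2_nonneg (convex_Ioi 0)
    (f' := E') (f'' := fun y => c*2 - 1/y + (β-α)/y^2
      + ∑ j ∈ Finset.range (m+1), ((y+β+j)^2)⁻¹)
  · exact fun y hy => ((hder1 y hy).continuousAt).continuousWithinAt
  · rw [interior_Ioi]; exact fun y hy => (hder1 y hy).hasDerivWithinAt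
  · rw [interior_Ioi]; exact fun y hy => (hder2 y hy).hasDerivWithinAt
  · rw [interior_Ioi]; exact hnonneg

theorem stmt_10 (α β : ℝ) (n : ℕ) (hn : 1 ≤ n) (x p : Fin n → ℝ)
    (hx : ∀ k, 0 < x k) (hp : ∀ k, 0 ≤ p k) (hsum : ∑ k, p k = 1)
    (hcond : (0 < β ∧ α ≤ 0) ∨ (1 ≤ β ∧ α ≤ 1 / 2)) :
    (∏ k, x k ^ (p k * (x k + β - α))) /
        (∑ k, p k * x k) ^ (∑ k, p k * x k + β - α)
      ≤ (∏ k, Real.Gamma (x k + β) ^ p k) / Real.Gamma (∑ k, p k * x k + β) := by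
  have hβ : 0 < β := by rcases hcond with ⟨h, _⟩ | ⟨h, _⟩; exacts [h, by linarith]
  set S : ℝ := ∑ k, p k * x k with hSdef
  have hS : 0 < S := by
    have hex : ∃ k, 0 < p k := by
      by_contra h; push_neg at h
      have : ∀ k, p k = 0 := fun k => le_antisymm (h k) (hp k)
      simp [this] at hsum
    obtain ⟨k, hk⟩ := hex
    exact Finset.sum_pos' (fun i _ => mul_nonneg (hp i) (hx i).le)
      ⟨k, Finset.mem_univ k, mul_pos hk (hx k)⟩
  -- log of GammaSeq
  have hGS : ∀ y : ℝ, 0 < y → ∀ m : ℕ, 1 ≤ m →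
      Real.log (Real.GammaSeq (y+β) m)
        = (y+β) * Real.log m + Real.log (Nat.factorial m)
          - ∑ j ∈ Finset.range (m+1), Real.log (y+β+j) := by
    intro y hy m hm
    have hm0 : (0:ℝ) < m := by exact_mod_cast hm
    have hfac : (0:ℝ) < (Nat.factorial m : ℝ) := by exact_mod_cast m.factorial_pos
    have hrp : (0:ℝ) < (m:ℝ) ^ (y+β) := Real.rpow_pos_of_pos hm0 _
    have hprod : ∀ j ∈ Finset.range (m+1), (0:ℝ) < (y+β) + j := by
      intro j _; positivity
    have hprodpos : (0:ℝ) < ∏ j ∈ Finset.range (m+1), ((y+β) + j) :=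
      Finset.prod_pos hprod
    rw [Real.GammaSeq, Real.log_div (by positivity) hprodpos.ne',
      Real.log_mul hrp.ne' hfac.ne', Real.log_rpow hm0,
      Real.log_prod (fun j hj => (hprod j hj).ne')]
  -- limit of the m-th objective
  have hlim : ∀ y : ℝ, 0 < y →
      Filter.Tendsto (fun m : ℕ => 3/(4*((m:ℝ)+1)) * y^2
          + Real.log (Real.GammaSeq (y+β) m) - (y+β-α) * Real.log y)
        Filter.atTop
        (nhds (Real.log (Real.Gamma (y+β)) - (y+β-α) * Real.log y)) := by
    intro y hy
    have hΓ : 0 < Real.Gamma (y+β) := Real.Gamma_pos_of_pos (by linarith)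
    have h1 : Filter.Tendsto (fun m : ℕ => Real.log (Real.GammaSeq (y+β) m))
        Filter.atTop (nhds (Real.log (Real.Gamma (y+β)))) :=
      ((Real.continuousAt_log hΓ.ne').tendsto).comp (Real.GammaSeq_tendsto_Gamma (y+β))
    have h2 : Filter.Tendsto (fun m : ℕ => 3/(4*((m:ℝ)+1)) * y^2)
        Filter.atTop (nhds 0) := by
      have ha : Filter.Tendsto (fun m : ℕ => 4*((m:ℝ)+1)) Filter.atTop Filter.atTop := by
        apply Filter.Tendsto.const_mul_atTop (by norm_num)
        exact Filter.tendsto_atTop_add_const_right _ _ tendsto_natCast_atTop_atTop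
      have hb := ha.inv_tendsto_atTop
      have := (hb.const_mul (3:ℝ)).mul_const (y^2)
      simpa [div_eq_mul_inv] using this
    have := (h2.add h1).sub_const ((y+β-α) * Real.log y)
    simpa using this
  -- Jensen at level m
  have hJ : ∀ m : ℕ, 1 ≤ m →
      3/(4*((m:ℝ)+1)) * S^2 + Real.log (Real.GammaSeq (S+β) m) - (S+β-α) * Real.log S
        ≤ ∑ k, p k * (3/(4*((m:ℝ)+1)) * (x k)^2
            + Real.log (Real.GammaSeq (x k+β) m) - (x k+β-α) * Real.log (x k)) := by
    intro m hm
    set c : ℝ := 3/(4*((m:ℝ)+1)) with hc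
    set E : ℝ → ℝ := fun y => y * Real.log m + c * y^2
      - y * Real.log y - (β - α) * Real.log y
      - ∑ j ∈ Finset.range (m+1), Real.log (y+β+j) with hE
    have hjen := (convexE α β hcond m).map_sum_le (t := Finset.univ) (w := p) (p := x)
      (fun k _ => hp k) hsum (fun k _ => hx k)
    simp only [smul_eq_mul] at hjen
    -- hjen : E (∑ p x) ≤ ∑ p * E x  (with the literal lambda)
    set K : ℝ := β * Real.log m + Real.log (Nat.factorial m) with hK
    have hEG : ∀ y : ℝ, 0 < y →
        E y = (c * y^2 + Real.log (Real.GammaSeq (y+β) m) - (y+β-α) * Real.log y) - K := by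
      intro y hy
      rw [hE, hGS y hy m hm, hK]
      ring
    have hsum' : ∑ k, p k * E (x k)
        = ∑ k, p k * (c * (x k)^2 + Real.log (Real.GammaSeq (x k+β) m)
            - (x k+β-α) * Real.log (x k)) - K := by
      rw [show ∑ k, p k * E (x k) = ∑ k, (p k * (c * (x k)^2
            + Real.log (Real.GammaSeq (x k+β) m) - (x k+β-α) * Real.log (x k)) - p k * K) by
          apply Finset.sum_congr rfl; intro k _; rw [hEG (x k) (hx k)]; ring]
      rw [Finset.sum_sub_distrib, ← Finset.sum_mul, hsum, one_mul]
    have hES := hEG S hS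
    have : E S ≤ ∑ k, p k * E (x k) := hjen
    rw [hES, hsum'] at this
    linarith
  -- pass to the limit
  have hf : Real.log (Real.Gamma (S+β)) - (S+β-α) * Real.log S
      ≤ ∑ k, p k * (Real.log (Real.Gamma (x k+β)) - (x k+β-α) * Real.log (x k)) := by
    have htend : Filter.Tendsto (fun m : ℕ => ∑ k, p k * (3/(4*((m:ℝ)+1)) * (x k)^2
        + Real.log (Real.GammaSeq (x k+β) m) - (x k+β-α) * Real.log (x k))) Filter.atTop
        (nhds (∑ k, p k * (Real.log (Real.Gamma (x k+β)) - (x k+β-α) * Real.log (x k)))) := by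
      apply tendsto_finset_sum
      intro k _
      exact (hlim (x k) (hx k)).const_mul (p k)
    have hev : (fun m : ℕ => 3/(4*((m:ℝ)+1)) * S^2 + Real.log (Real.GammaSeq (S+β) m)
        - (S+β-α) * Real.log S) ≤ᶠ[Filter.atTop] (fun m : ℕ => ∑ k, p k * (3/(4*((m:ℝ)+1)) * (x k)^2
        + Real.log (Real.GammaSeq (x k+β) m) - (x k+β-α) * Real.log (x k))) := by
      filter_upwards [Filter.eventually_ge_atTop 1] with m hm
      exact hJ m hm
    exact le_of_tendsto_of_tendsto (hlim S hS) htend hev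
  -- rewrite both sides as exponentials
  have hL : (∏ k, x k ^ (p k * (x k + β - α))) / S ^ (S + β - α)
      = Real.exp ((∑ k, p k * ((x k + β - α) * Real.log (x k))) - (S+β-α) * Real.log S) := by
    rw [Real.exp_sub]
    congr 1
    · symm; rw [Real.exp_sum]
      apply Finset.prod_congr rfl
      intro k _
      rw [Real.rpow_def_of_pos (hx k)]
      congr 1; ring
    · rw [Real.rpow_def_of_pos hS]
      ring_nf
  have hR : (∏ k, Real.Gamma (x k + β) ^ p k) / Real.Gamma (S + β)
      = Real.exp ((∑ k, p k * Real.log (Real.Gamma (x k+β))) - Real.log (Real.Gamma (S+β))) := by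
    rw [Real.exp_sub]
    congr 1
    · symm; rw [Real.exp_sum]
      apply Finset.prod_congr rfl
      intro k _
      rw [Real.rpow_def_of_pos (Real.Gamma_pos_of_pos (by have := hx k; linarith))]
      congr 1; ring
    · exact (Real.exp_log (Real.Gamma_pos_of_pos (by linarith))).symm
  rw [hL, hR, Real.exp_le_exp]
  have hexpand : ∑ k, p k * (Real.log (Real.Gamma (x k+β)) - (x k+β-α) * Real.log (x k))
      = ∑ k, p k * Real.log (Real.Gamma (x k+β))
        - ∑ k, p k * ((x k + β - α) * Real.log (x k)) := by
    rw [← Finset.sum_sub_distrib]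
    apply Finset.sum_congr rfl
    intro k _; ring
  rw [hexpand] at hf
  linarith
end

section
/- Let n ≥ 1 be an integer, x_1, …, x_n > 0, and p_1, …, p_n ≥ 0 with p_1 + ⋯ + p_n = 1. If α ≥ β ≥ 1/2, then (∏_{k=1}^n Γ(x_k + β)^{p_k}) / Γ(∑_{k=1}^n p_k x_k + β) ≤ (∏_{k=1}^n x_k^{p_k (x_k + β − α)}) / (∑_{k=1}^n p_k x_k)^{∑_{k=1}^n p_k x_k + β − α}. -/
open Real Finset

-- telescoping trigamma bound
lemma sum_inv_sq_le {β x : ℝ} (hβ : 1/2 ≤ β) (hx : 0 < x) (m : ℕ) :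
    ∑ j ∈ Finset.range m, ((x + β + (j:ℝ)) ^ 2)⁻¹ ≤ x⁻¹ := by
  have key : ∀ j ∈ Finset.range m, ((x + β + (j:ℝ)) ^ 2)⁻¹ ≤ (x + (j:ℝ))⁻¹ - (x + ((j:ℕ)+1 : ℕ))⁻¹ := by
    intro j _
    have ha : (0:ℝ) < x + j := by positivity
    have hb : (0:ℝ) < x + j + 1 := by linarith
    have hsq : (x + j) * (x + j + 1) ≤ (x + β + j) ^ 2 := by nlinarith
    have hpos : (0:ℝ) < (x + j) * (x + j + 1) := by positivity
    have h1 : ((x + β + (j:ℝ)) ^ 2)⁻¹ ≤ ((x + j) * (x + j + 1))⁻¹ := by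
      apply inv_anti₀ hpos hsq
    have h2 : ((x + j) * (x + j + 1))⁻¹ = (x + (j:ℝ))⁻¹ - (x + ((j:ℕ)+1 : ℕ))⁻¹ := by
      push_cast
      rw [mul_inv, eq_sub_iff_add_eq]
      field_simp
      ring
    linarith
  calc ∑ j ∈ Finset.range m, ((x + β + (j:ℝ)) ^ 2)⁻¹
      ≤ ∑ j ∈ Finset.range m, ((x + (j:ℝ))⁻¹ - (x + ((j:ℕ)+1 : ℕ))⁻¹) :=
        Finset.sum_le_sum key
    _ = (x + ((0:ℕ):ℝ))⁻¹ - (x + (m:ℝ))⁻¹ := by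
        rw [Finset.sum_range_sub' (fun j : ℕ => (x + (j:ℝ))⁻¹)]
    _ ≤ x⁻¹ := by
        have : (0:ℝ) < x + m := by positivity
        simp only [Nat.cast_zero, add_zero]
        have : (0:ℝ) ≤ (x + (m:ℝ))⁻¹ := by positivity
        linarith

section
variable (α β : ℝ)

noncomputable def hfun (n : ℕ) (x : ℝ) : ℝ :=
  (x + β) * Real.log n + Real.log (n.factorial) -
    ∑ j ∈ Finset.range (n + 1), Real.log (x + β + (j:ℝ)) - (x + β - α) * Real.log x

noncomputable def hfun' (n : ℕ) (x : ℝ) : ℝ :=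
  Real.log n - ∑ j ∈ Finset.range (n + 1), (x + β + (j:ℝ))⁻¹ -
    (Real.log x + (x + β - α) * x⁻¹)

noncomputable def hfun'' (n : ℕ) (x : ℝ) : ℝ :=
  0 - ∑ j ∈ Finset.range (n + 1), (-1 / (x + β + (j:ℝ)) ^ 2) -
    (x⁻¹ + (1 * x⁻¹ + (x + β - α) * -(x ^ 2)⁻¹))

lemma hpos_aux (hβ : 1/2 ≤ β) {x : ℝ} (hx : 0 < x) (j : ℕ) : (0:ℝ) < x + β + j := by
  have : (0:ℝ) ≤ (j:ℝ) := Nat.cast_nonneg j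
  linarith

lemma hasDerivAt_hfun (hβ : 1/2 ≤ β) (n : ℕ) {x : ℝ} (hx : 0 < x) :
    HasDerivAt (hfun α β n) (hfun' α β n x) x := by
  have lin : HasDerivAt (fun y : ℝ => y + β - α) 1 x := by
    simpa using ((hasDerivAt_id x).add_const β).sub_const α
  have A : HasDerivAt (fun y : ℝ => (y + β) * Real.log n + Real.log (n.factorial))
      (Real.log n) x := by
    simpa using (((hasDerivAt_id x).add_const β).mul_const (Real.log n)).add_const
      (Real.log (n.factorial))
  have C : HasDerivAt (fun y : ℝ => ∑ j ∈ Finset.range (n + 1), Real.log (y + β + (j:ℝ)))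
      (∑ j ∈ Finset.range (n + 1), (x + β + (j:ℝ))⁻¹) x := by
    apply HasDerivAt.fun_sum
    intro j _
    have base : HasDerivAt (fun y : ℝ => y + β + (j:ℝ)) 1 x :=
      ((hasDerivAt_id x).add_const β).add_const (j:ℝ)
    have := base.log (hpos_aux β hβ hx j).ne'
    simpa [one_div] using this
  have D : HasDerivAt (fun y : ℝ => (y + β - α) * Real.log y)
      (Real.log x + (x + β - α) * x⁻¹) x := by
    have := lin.mul (Real.hasDerivAt_log hx.ne')
    simp only [one_mul] at this
    exact this
  exact (A.sub C).sub D

lemma hasDerivAt_hfun' (hβ : 1/2 ≤ β) (n : ℕ) {x : ℝ} (hx : 0 < x) :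
    HasDerivAt (hfun' α β n) (hfun'' α β n x) x := by
  have lin : HasDerivAt (fun y : ℝ => y + β - α) 1 x := by
    simpa using ((hasDerivAt_id x).add_const β).sub_const α
  have A : HasDerivAt (fun _ : ℝ => Real.log (n:ℝ)) 0 x := hasDerivAt_const x _
  have C : HasDerivAt (fun y : ℝ => ∑ j ∈ Finset.range (n + 1), (y + β + (j:ℝ))⁻¹)
      (∑ j ∈ Finset.range (n + 1), (-1 / (x + β + (j:ℝ)) ^ 2)) x := by
    apply HasDerivAt.fun_sum
    intro j _
    have base : HasDerivAt (fun y : ℝ => y + β + (j:ℝ)) 1 x :=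
      ((hasDerivAt_id x).add_const β).add_const (j:ℝ)
    have := base.inv (hpos_aux β hβ hx j).ne'
    exact this
  have D : HasDerivAt (fun y : ℝ => Real.log y + (y + β - α) * y⁻¹)
      (x⁻¹ + (1 * x⁻¹ + (x + β - α) * -(x ^ 2)⁻¹)) x :=
    (Real.hasDerivAt_log hx.ne').add (lin.mul (hasDerivAt_inv hx.ne'))
  exact (A.sub C).sub D

lemma hfun''_nonpos (hβ : 1/2 ≤ β) (hαβ : β ≤ α) (n : ℕ) {x : ℝ} (hx : 0 < x) :
    hfun'' α β n x ≤ 0 := by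
  have hS : ∑ j ∈ Finset.range (n + 1), ((x + β + (j:ℝ)) ^ 2)⁻¹ ≤ x⁻¹ :=
    sum_inv_sq_le hβ hx (n + 1)
  have hrw : ∑ j ∈ Finset.range (n + 1), (-1 / (x + β + (j:ℝ)) ^ 2)
      = -∑ j ∈ Finset.range (n + 1), ((x + β + (j:ℝ)) ^ 2)⁻¹ := by
    rw [← Finset.sum_neg_distrib]
    congr 1
    ext j
    rw [neg_div, one_div]
  unfold hfun''
  rw [hrw]
  have h2 : (x + β - α) * (x ^ 2)⁻¹ ≤ x * (x ^ 2)⁻¹ := by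
    have : (0:ℝ) < (x ^ 2)⁻¹ := by positivity
    nlinarith
  have h3 : x * (x ^ 2)⁻¹ = x⁻¹ := by
    field_simp
  nlinarith [hS]

lemma concave_hfun (hβ : 1/2 ≤ β) (hαβ : β ≤ α) (n : ℕ) :
    ConcaveOn ℝ (Set.Ioi 0) (hfun α β n) := by
  apply concaveOn_of_hasDerivWithinAt2_nonpos (f' := hfun' α β n) (f'' := hfun'' α β n)
    (convex_Ioi 0)
  · intro y hy
    exact (hasDerivAt_hfun α β hβ n hy).continuousAt.continuousWithinAt
  · intro y hy
    rw [interior_Ioi] at hy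
    exact (hasDerivAt_hfun α β hβ n hy).hasDerivWithinAt
  · intro y hy
    rw [interior_Ioi] at hy
    exact (hasDerivAt_hfun' α β hβ n hy).hasDerivWithinAt
  · intro y hy
    rw [interior_Ioi] at hy
    exact hfun''_nonpos α β hβ hαβ n hy

end

lemma hfun_eq (hβ : 1/2 ≤ β) {x : ℝ} (hx : 0 < x) {n : ℕ} (hn : 1 ≤ n) :
    hfun α β n x = Real.log (Real.GammaSeq (x + β) n) - (x + β - α) * Real.log x := by
  have hn0 : (0:ℝ) < (n:ℝ) := by exact_mod_cast hn
  have hterm : ∀ j ∈ Finset.range (n + 1), (0:ℝ) < x + β + (j:ℝ) :=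
    fun j _ => hpos_aux β hβ hx j
  have hprod : (0:ℝ) < ∏ j ∈ Finset.range (n + 1), (x + β + (j:ℝ)) :=
    Finset.prod_pos hterm
  have hfact : (0:ℝ) < (n.factorial : ℝ) := by exact_mod_cast n.factorial_pos
  have hrpow : (0:ℝ) < (n:ℝ) ^ (x + β) := Real.rpow_pos_of_pos hn0 _
  unfold hfun
  rw [Real.GammaSeq]
  rw [Real.log_div (by positivity) hprod.ne', Real.log_mul hrpow.ne' hfact.ne',
    Real.log_rpow hn0, Real.log_prod (fun j hj => (hterm j hj).ne')]

lemma tendsto_hfun (hβ : 1/2 ≤ β) {x : ℝ} (hx : 0 < x) :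
    Filter.Tendsto (fun n => hfun α β n x) Filter.atTop
      (nhds (Real.log (Real.Gamma (x + β)) - (x + β - α) * Real.log x)) := by
  have hΓ : (0:ℝ) < Real.Gamma (x + β) := Real.Gamma_pos_of_pos (by linarith)
  have h1 : Filter.Tendsto (fun n => Real.log (Real.GammaSeq (x + β) n)
      - (x + β - α) * Real.log x) Filter.atTop
      (nhds (Real.log (Real.Gamma (x + β)) - (x + β - α) * Real.log x)) := by
    apply Filter.Tendsto.sub_const
    exact ((Real.continuousAt_log hΓ.ne').tendsto).comp (Real.GammaSeq_tendsto_Gamma (x + β))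
  apply h1.congr'
  filter_upwards [Filter.eventually_ge_atTop 1] with n hn
  exact (hfun_eq (α := α) (β := β) hβ hx hn).symm

theorem stmt_11 (α β : ℝ) (n : ℕ) (hn : 1 ≤ n) (x p : Fin n → ℝ)
    (hx : ∀ k, 0 < x k) (hp : ∀ k, 0 ≤ p k) (hsum : ∑ k, p k = 1)
    (hβ : 1 / 2 ≤ β) (hαβ : β ≤ α) :
    (∏ k, Real.Gamma (x k + β) ^ p k) / Real.Gamma (∑ k, p k * x k + β)
      ≤ (∏ k, x k ^ (p k * (x k + β - α))) /
          (∑ k, p k * x k) ^ (∑ k, p k * x k + β - α) := by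
  classical
  set s := ∑ k, p k * x k with hs
  have hs_pos : 0 < s := by
    have hne : ∃ k, p k ≠ 0 := by
      by_contra h
      push_neg at h
      rw [Finset.sum_congr rfl (fun k _ => h k)] at hsum
      simp at hsum
    obtain ⟨k0, hk0⟩ := hne
    exact Finset.sum_pos' (fun i _ => mul_nonneg (hp i) (hx i).le)
      ⟨k0, Finset.mem_univ k0, mul_pos ((hp k0).lt_of_ne' hk0) (hx k0)⟩
  have hxβ : ∀ k, 0 < x k + β := fun k => by have := hx k; linarith
  have hsβ : 0 < s + β := by linarith
  have hG : ∀ k, 0 < Real.Gamma (x k + β) := fun k => Real.Gamma_pos_of_pos (hxβ k)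
  have hGs : 0 < Real.Gamma (s + β) := Real.Gamma_pos_of_pos hsβ
  -- Jensen for each m
  have jen : ∀ m : ℕ, ∑ k, p k * hfun α β m (x k) ≤ hfun α β m s := by
    intro m
    have hcc := (concave_hfun (α := α) (β := β) hβ hαβ m).le_map_sum
      (t := Finset.univ) (w := p) (p := x) (fun i _ => hp i) (by simpa using hsum)
      (fun i _ => hx i)
    simpa [smul_eq_mul, hs] using hcc
  -- limits
  have lim1 : Filter.Tendsto (fun m => ∑ k, p k * hfun α β m (x k)) Filter.atTop
      (nhds (∑ k, p k * (Real.log (Real.Gamma (x k + β))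
        - (x k + β - α) * Real.log (x k)))) :=
    tendsto_finset_sum _ fun k _ =>
      tendsto_const_nhds.mul (tendsto_hfun (α := α) (β := β) hβ (hx k))
  have lim2 := tendsto_hfun (α := α) (β := β) hβ hs_pos
  have key : ∑ k, p k * (Real.log (Real.Gamma (x k + β)) - (x k + β - α) * Real.log (x k))
      ≤ Real.log (Real.Gamma (s + β)) - (s + β - α) * Real.log s :=
    le_of_tendsto_of_tendsto' lim1 lim2 jen
  -- exponentiate
  have L : (∏ k, Real.Gamma (x k + β) ^ p k) / Real.Gamma (s + β)
      = Real.exp (∑ k, p k * Real.log (Real.Gamma (x k + β))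
          - Real.log (Real.Gamma (s + β))) := by
    rw [Real.exp_sub, Real.exp_sum, Real.exp_log hGs]
    congr 1
    refine Finset.prod_congr rfl fun k _ => ?_
    rw [Real.rpow_def_of_pos (hG k), mul_comm]
  have R : (∏ k, x k ^ (p k * (x k + β - α))) / s ^ (s + β - α)
      = Real.exp (∑ k, p k * ((x k + β - α) * Real.log (x k))
          - (s + β - α) * Real.log s) := by
    rw [Real.exp_sub, Real.exp_sum]
    congr 1
    · refine Finset.prod_congr rfl fun k _ => ?_
      rw [Real.rpow_def_of_pos (hx k)]
      congr 1
      ring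
    · rw [Real.rpow_def_of_pos hs_pos, mul_comm]
  rw [L, R]
  apply Real.exp_le_exp.mpr
  have expand : ∑ k, p k * (Real.log (Real.Gamma (x k + β)) - (x k + β - α) * Real.log (x k))
      = ∑ k, p k * Real.log (Real.Gamma (x k + β))
        - ∑ k, p k * ((x k + β - α) * Real.log (x k)) := by
    rw [← Finset.sum_sub_distrib]
    refine Finset.sum_congr rfl fun k _ => ?_
    ring
  rw [expand] at key
  linarith
end

section
/- Let α ≥ β ≥ 1/2. Then for all x, y ∈ (0,∞) with x ≠ y, the inequality I(x,y) < [ (x/y)^{α−β} · Γ(x+β)/Γ(y+β) ]^{1/(x−y)} holds, where I(a,b) = (1/e) · (b^b / a^a)^{1/(b−a)} for a, b > 0 with a ≠ b is the identric (exponential) mean. -/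
open Real

open Filter Nat Finset

lemma aux_log {t : ℝ} (ht : 0 < t) : 2*t/(2+t) < Real.log (1+t) := by
  have key : StrictMonoOn (fun t : ℝ => Real.log (1+t) - 2*t/(2+t)) (Set.Ici 0) := by
    apply strictMonoOn_of_deriv_pos (convex_Ici 0)
    · apply ContinuousOn.sub
      · apply ContinuousOn.log (by fun_prop)
        intro u hu; simp at hu; positivity
      · apply ContinuousOn.div (by fun_prop) (by fun_prop)
        intro u hu; simp at hu; positivity
    · intro u hu
      rw [interior_Ici] at hu
      simp only [Set.mem_Ioi] at hu
      have h1 : HasDerivAt (fun t : ℝ => Real.log (1+t)) (1/(1+u)) u := by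
        have := ((hasDerivAt_id u).const_add 1).log (by positivity)
        simpa using this
      have h2 : HasDerivAt (fun t : ℝ => 2*t/(2+t)) ((2*(2+u) - 2*u*1)/((2+u)^2)) u := by
        have := HasDerivAt.div ((hasDerivAt_id u).const_mul 2) ((hasDerivAt_id u).const_add 2)
          (show (2:ℝ)+id u ≠ 0 by simp; positivity)
        simpa [Pi.div_def] using this
      have := (h1.sub h2).deriv
      rw [show (fun t : ℝ => Real.log (1+t) - 2*t/(2+t)) = (fun t : ℝ => Real.log (1+t)) - (fun t : ℝ => 2*t/(2+t)) from rfl, this]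
      rw [sub_pos, div_lt_div_iff₀ (by positivity) (by positivity)]
      nlinarith
  have h0 : (0:ℝ) ∈ Set.Ici (0:ℝ) := by simp
  have ht' : t ∈ Set.Ici (0:ℝ) := le_of_lt ht
  have := key h0 ht' ht
  simpa using this

lemma log_diff_gt {c : ℝ} (hc : 0 < c) : 1/(c+1/2) < Real.log (c+1) - Real.log c := by
  have h := aux_log (t := 1/c) (by positivity)
  have h1 : Real.log (1 + 1/c) = Real.log (c+1) - Real.log c := by
    rw [show (1 : ℝ) + 1/c = (c+1)/c by field_simp, Real.log_div (by positivity) (ne_of_gt hc)]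
  have h2 : 2*(1/c)/(2+1/c) = 1/(c+1/2) := by field_simp
  rw [h1, h2] at h; exact h

lemma phi_diff_le {a b : ℝ} (ha : 0 < a) (hab : a ≤ b) :
    b*Real.log b - a*Real.log a - (b-a) ≤ (b-a)*Real.log b := by
  have hb : 0 < b := lt_of_lt_of_le ha hab
  have h1 : Real.log (b/a) ≤ b/a - 1 := Real.log_le_sub_one_of_pos (by positivity)
  have h2 : Real.log (b/a) = Real.log b - Real.log a := Real.log_div (ne_of_gt hb) (ne_of_gt ha)
  rw [h2] at h1
  have h3 : a * (Real.log b - Real.log a) ≤ a * (b/a - 1) := by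
    exact mul_le_mul_of_nonneg_left h1 (le_of_lt ha)
  have h4 : a * (b/a - 1) = b - a := by field_simp
  nlinarith

noncomputable def eFun (c : ℝ) : ℝ :=
  Real.log (c + 1/2) - ((c+1) * Real.log (c+1) - (c+1)) + (c * Real.log c - c)

lemma eFun_lt {a b : ℝ} (ha : 0 < a) (hab : a < b) : eFun b < eFun a := by
  have key : StrictAntiOn eFun (Set.Icc a b) := by
    apply strictAntiOn_of_deriv_neg (convex_Icc a b)
    · unfold eFun
      apply ContinuousOn.add
      apply ContinuousOn.sub
      · apply ContinuousOn.log (by fun_prop)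
        intro u hu; simp only [Set.mem_Icc] at hu
        have : (0:ℝ) < u + 1/2 := by linarith [hu.1]
        exact ne_of_gt this
      · apply ContinuousOn.sub _ (by fun_prop)
        apply ContinuousOn.mul (by fun_prop)
        apply ContinuousOn.log (by fun_prop)
        intro u hu; simp only [Set.mem_Icc] at hu
        have : (0:ℝ) < u + 1 := by linarith [hu.1]
        exact ne_of_gt this
      · apply ContinuousOn.sub _ (by fun_prop)
        apply ContinuousOn.mul (by fun_prop)
        apply ContinuousOn.log (by fun_prop)
        intro u hu; simp only [Set.mem_Icc] at hu
        exact ne_of_gt (lt_of_lt_of_le ha hu.1)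
    · intro u hu
      rw [interior_Icc] at hu
      have hu0 : 0 < u := lt_trans ha hu.1
      have h1 : HasDerivAt (fun c : ℝ => Real.log (c + 1/2)) (1/(u+1/2)) u := by
        have := ((hasDerivAt_id u).add_const (1/2 : ℝ)).log (by positivity)
        simpa using this
      have h2 : HasDerivAt (fun c : ℝ => (c+1) * Real.log (c+1) - (c+1))
          ((1 * Real.log (u+1) + (u+1) * (1/(u+1))) - 1) u := by
        have hl : HasDerivAt (fun c : ℝ => Real.log (c+1)) (1/(u+1)) u := by
          have := ((hasDerivAt_id u).add_const (1 : ℝ)).log (by positivity)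
          simpa using this
        exact (((hasDerivAt_id u).add_const (1:ℝ)).mul hl).sub ((hasDerivAt_id u).add_const 1)
      have h3 : HasDerivAt (fun c : ℝ => c * Real.log c - c)
          ((1 * Real.log u + u * (1/u)) - 1) u := by
        have := ((hasDerivAt_id u).mul (Real.hasDerivAt_log (ne_of_gt hu0))).sub (hasDerivAt_id u)
        simpa [div_eq_mul_inv, Pi.mul_def, Pi.sub_def] using this
      have hD := ((h1.sub h2).add h3).deriv
      show deriv (fun c : ℝ => Real.log (c + 1/2) - ((c+1) * Real.log (c+1) - (c+1)) + (c * Real.log c - c)) u < 0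
      rw [show (fun c : ℝ => Real.log (c + 1/2) - ((c+1) * Real.log (c+1) - (c+1)) + (c * Real.log c - c)) = ((fun c : ℝ => Real.log (c + 1/2)) - (fun c : ℝ => (c+1) * Real.log (c+1) - (c+1))) + (fun c : ℝ => c * Real.log c - c) from rfl, hD]
      have h4 := log_diff_gt hu0
      have e1 : (u+1) * (1/(u+1)) = 1 := by field_simp
      have e2 : u * (1/u) = 1 := by field_simp
      rw [e1, e2]
      nlinarith
  exact key (Set.mem_Icc.mpr ⟨le_refl a, le_of_lt hab⟩)
    (Set.mem_Icc.mpr ⟨le_of_lt hab, le_refl b⟩) hab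

noncomputable def Phi (t : ℝ) : ℝ := t * Real.log t - t

lemma log_eq_eFun (u : ℝ) : Real.log (u + 1/2) = eFun u + (Phi (u+1) - Phi u) := by
  unfold eFun Phi; ring

lemma log_GammaSeq {s : ℝ} (hs : 0 < s) {n : ℕ} (hn : 1 ≤ n) :
    Real.log (Real.GammaSeq s n)
      = s * Real.log n + Real.log (n !) - ∑ j ∈ Finset.range (n+1), Real.log (s + j) := by
  have hn0 : (0:ℝ) < (n:ℝ) := by exact_mod_cast hn
  have hfac : (0:ℝ) < (n ! : ℝ) := by exact_mod_cast Nat.factorial_pos n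
  have hterm : ∀ j ∈ Finset.range (n+1), s + (j:ℝ) ≠ 0 := by
    intro j _; positivity
  have hprod : (0:ℝ) < ∏ j ∈ Finset.range (n+1), (s + (j:ℝ)) := by
    apply Finset.prod_pos; intro j _; positivity
  rw [Real.GammaSeq, Real.log_div (by positivity) (ne_of_gt hprod),
    Real.log_mul (by positivity) (ne_of_gt hfac), Real.log_rpow hn0,
    Real.log_prod hterm]

lemma sum_log_shift (c : ℝ) (n : ℕ) :
    ∑ j ∈ Finset.range (n+1), Real.log (c + 1/2 + j)
      = (∑ j ∈ Finset.range (n+1), eFun (c + j)) + (Phi (c + n + 1) - Phi c) := by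
  have h1 : ∀ j : ℕ, Real.log (c + 1/2 + j)
      = eFun (c + j) + ((fun k : ℕ => Phi (c + k)) (j+1) - (fun k : ℕ => Phi (c + k)) j) := by
    intro j
    have e1 : c + 1/2 + (j:ℝ) = (c + j) + 1/2 := by ring
    have e2 : c + ((j:ℕ)+1 : ℕ) = (c + (j:ℝ)) + 1 := by push_cast; ring
    rw [e1, log_eq_eFun]
    simp only [e2]
  calc ∑ j ∈ Finset.range (n+1), Real.log (c + 1/2 + j)
      = ∑ j ∈ Finset.range (n+1), (eFun (c + j)
          + ((fun k : ℕ => Phi (c + k)) (j+1) - (fun k : ℕ => Phi (c + k)) j)) := by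
        exact Finset.sum_congr rfl fun j _ => h1 j
    _ = (∑ j ∈ Finset.range (n+1), eFun (c + j)) + (Phi (c + n + 1) - Phi c) := by
        rw [Finset.sum_add_distrib, Finset.sum_range_sub (fun k : ℕ => Phi (c + k))]
        push_cast
        ring_nf

/-- Key lemma for β = 1/2. -/
lemma key_half {x y : ℝ} (hy : 0 < y) (hxy : y < x) :
    x * Real.log x - y * Real.log y - (x - y)
      < Real.log (Real.Gamma (x + 1/2)) - Real.log (Real.Gamma (y + 1/2)) := by
  have hx : 0 < x := lt_trans hy hxy
  set δ : ℝ := eFun y - eFun x with hδdef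
  have hδ : 0 < δ := sub_pos.mpr (eFun_lt hy hxy)
  set D : ℕ → ℝ := fun n =>
    Real.log (Real.GammaSeq (x+1/2) n) - Real.log (Real.GammaSeq (y+1/2) n) with hD
  have hGx : 0 < Real.Gamma (x + 1/2) := Real.Gamma_pos_of_pos (by linarith)
  have hGy : 0 < Real.Gamma (y + 1/2) := Real.Gamma_pos_of_pos (by linarith)
  have h1 : Tendsto D atTop
      (nhds (Real.log (Real.Gamma (x+1/2)) - Real.log (Real.Gamma (y+1/2)))) := by
    apply Tendsto.sub
    · exact ((Real.continuousAt_log (ne_of_gt hGx)).tendsto).comp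
        (Real.GammaSeq_tendsto_Gamma (x+1/2))
    · exact ((Real.continuousAt_log (ne_of_gt hGy)).tendsto).comp
        (Real.GammaSeq_tendsto_Gamma (y+1/2))
  have h2 : ∀ n : ℕ, 1 ≤ n →
      Phi x - Phi y + δ - (x-y) * (Real.log (x+n+1) - Real.log n) ≤ D n := by
    intro n hn
    have hn0 : (0:ℝ) < (n:ℝ) := by exact_mod_cast hn
    have hlx := log_GammaSeq (s := x + 1/2) (by linarith) hn
    have hly := log_GammaSeq (s := y + 1/2) (by linarith) hn
    have hDn : D n = (x - y) * Real.log n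
        - ((∑ j ∈ Finset.range (n+1), Real.log (x + 1/2 + j))
          - (∑ j ∈ Finset.range (n+1), Real.log (y + 1/2 + j))) := by
      simp only [hD]
      rw [hlx, hly]
      have ex : ∀ j : ℕ, (x + 1/2 + (j:ℝ)) = (x + 1/2) + (j:ℝ) := fun j => by ring
      ring_nf
    rw [hDn, sum_log_shift, sum_log_shift]
    have hsum : δ ≤ ∑ j ∈ Finset.range (n+1), (eFun (y + j) - eFun (x + j)) := by
      have h0 : (0:ℕ) ∈ Finset.range (n+1) := by simp
      have := Finset.single_le_sum (f := fun j : ℕ => eFun (y + j) - eFun (x + j))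
        (fun j _ => le_of_lt (sub_pos.mpr (eFun_lt (by positivity) (by
          have : (y:ℝ) + j < x + j := by linarith
          exact this)))) h0
      simpa [hδdef] using this
    have hsplit : ∑ j ∈ Finset.range (n+1), (eFun (y + j) - eFun (x + j))
        = (∑ j ∈ Finset.range (n+1), eFun (y + j))
          - ∑ j ∈ Finset.range (n+1), eFun (x + j) := Finset.sum_sub_distrib _ _
    rw [hsplit] at hsum
    have hphi : Phi (x + n + 1) - Phi (y + n + 1) ≤ (x - y) * Real.log (x + n + 1) := by
      have := phi_diff_le (a := y + n + 1) (b := x + n + 1) (by positivity) (by linarith)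
      unfold Phi
      have e : (x + n + 1) - (y + n + 1) = x - y := by ring
      rw [e] at this
      linarith
    linarith [hsum, hphi]
  have hq : Tendsto (fun n : ℕ => Real.log (x+n+1) - Real.log n) atTop (nhds 0) := by
    have ha : Tendsto (fun n : ℕ => (x + n + 1)/n) atTop (nhds 1) := by
      have hb : Tendsto (fun n : ℕ => (x+1)/n + 1) atTop (nhds 1) := by
        have := (tendsto_const_div_atTop_nhds_zero_nat (x+1)).add
          (tendsto_const_nhds (x := (1:ℝ)) (f := atTop (α := ℕ)))
        simpa using this
      apply hb.congr'
      filter_upwards [eventually_ge_atTop 1] with n hn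
      have hn0 : (n:ℝ) ≠ 0 := Nat.cast_ne_zero.mpr (by omega)
      field_simp
      ring
    have hlog : Tendsto (fun n : ℕ => Real.log ((x + n + 1)/n)) atTop (nhds 0) := by
      have := ((Real.continuousAt_log one_ne_zero).tendsto).comp ha
      simpa [Function.comp_def, Real.log_one] using this
    apply hlog.congr'
    filter_upwards [eventually_ge_atTop 1] with n hn
    have hn0 : (0:ℝ) < (n:ℝ) := by exact_mod_cast hn
    rw [Real.log_div (by positivity) (ne_of_gt hn0)]
  have h3 : Tendsto (fun n : ℕ => Phi x - Phi y + δ - (x-y) * (Real.log (x+n+1) - Real.log n))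
      atTop (nhds (Phi x - Phi y + δ)) := by
    have := (tendsto_const_nhds (x := Phi x - Phi y + δ) (f := atTop (α := ℕ))).sub
      ((tendsto_const_nhds (x := x - y) (f := atTop (α := ℕ))).mul hq)
    simpa using this
  have hfin : Phi x - Phi y + δ
      ≤ Real.log (Real.Gamma (x+1/2)) - Real.log (Real.Gamma (y+1/2)) := by
    apply le_of_tendsto_of_tendsto h3 h1
    filter_upwards [eventually_ge_atTop 1] with n hn
    exact h2 n hn
  have : Phi x - Phi y = x * Real.log x - y * Real.log y - (x - y) := by unfold Phi; ring
  linarith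

lemma beta_red {x y β : ℝ} (hy : 0 < y) (hxy : y < x) (hβ : 1/2 ≤ β) :
    Real.log (Real.Gamma (y + β)) - Real.log (Real.Gamma (y + 1/2))
      ≤ Real.log (Real.Gamma (x + β)) - Real.log (Real.Gamma (x + 1/2)) := by
  rcases eq_or_lt_of_le hβ with h | h
  · rw [← h]; simp
  have hx : 0 < x := lt_trans hy hxy
  set f : ℝ → ℝ := Real.log ∘ Real.Gamma with hf
  have hc : ConvexOn ℝ (Set.Ioi 0) f := Real.convexOn_log_Gamma
  have m1 : (y + 1/2 : ℝ) ∈ Set.Ioi (0:ℝ) := by simp; linarith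
  have m2 : (y + β : ℝ) ∈ Set.Ioi (0:ℝ) := by simp; linarith
  have m3 : (x + 1/2 : ℝ) ∈ Set.Ioi (0:ℝ) := by simp; linarith
  have m4 : (x + β : ℝ) ∈ Set.Ioi (0:ℝ) := by simp; linarith
  have s1 := hc.secant_mono m1 m2 m4 (by intro hh; linarith [hh]) (by intro hh; nlinarith [hh])
    (by linarith)
  -- s1 : (f (y+β) - f (y+1/2)) / (y+β - (y+1/2)) ≤ (f (x+β) - f (y+1/2)) / (x+β - (y+1/2))
  have s2 := hc.secant_mono m4 m1 m3 (by intro hh; nlinarith [hh]) (by intro hh; linarith [hh])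
    (by linarith)
  -- s2 : (f (y+1/2) - f (x+β)) / (y+1/2 - (x+β)) ≤ (f (x+1/2) - f (x+β)) / (x+1/2 - (x+β))
  have e1 : (f (y+1/2) - f (x+β)) / (y+1/2 - (x+β))
      = (f (x+β) - f (y+1/2)) / (x+β - (y+1/2)) := by
    rw [← neg_div_neg_eq]; ring_nf
  have e2 : (f (x+1/2) - f (x+β)) / (x+1/2 - (x+β))
      = (f (x+β) - f (x+1/2)) / (x+β - (x+1/2)) := by
    rw [← neg_div_neg_eq]; ring_nf
  rw [e1, e2] at s2
  have s3 : (f (y+β) - f (y+1/2)) / (y+β - (y+1/2))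
      ≤ (f (x+β) - f (x+1/2)) / (x+β - (x+1/2)) := le_trans s1 s2
  have hd : (0:ℝ) < β - 1/2 := by linarith
  have ed : (y+β - (y+1/2)) = β - 1/2 := by ring
  have ed2 : (x+β - (x+1/2)) = β - 1/2 := by ring
  rw [ed, ed2] at s3
  have s4 : f (y+β) - f (y+1/2) ≤ f (x+β) - f (x+1/2) := by
    have := mul_le_mul_of_nonneg_right s3 (le_of_lt hd)
    rwa [div_mul_cancel₀ _ (ne_of_gt hd), div_mul_cancel₀ _ (ne_of_gt hd)] at this
  simpa [hf] using s4

lemma key_beta {x y β : ℝ} (hy : 0 < y) (hxy : y < x) (hβ : 1/2 ≤ β) :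
    x * Real.log x - y * Real.log y - (x - y)
      < Real.log (Real.Gamma (x + β)) - Real.log (Real.Gamma (y + β)) := by
  have h1 := key_half hy hxy
  have h2 := beta_red hy hxy hβ
  linarith

/-- The identric (exponential) mean of two distinct positive numbers. -/
noncomputable def identricMean (a b : ℝ) : ℝ :=
  (1 / Real.exp 1) * (b ^ b / a ^ a) ^ (1 / (b - a))

theorem stmt_12 (α β : ℝ) (hβ : 1 / 2 ≤ β) (hαβ : β ≤ α)
    (x y : ℝ) (hx : 0 < x) (hy : 0 < y) (hxy : x ≠ y) :
    identricMean x y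
      < ((x / y) ^ (α - β) * (Real.Gamma (x + β) / Real.Gamma (y + β))) ^ (1 / (x - y)) := by
  have hβ0 : (0:ℝ) < β := lt_of_lt_of_le (by norm_num) hβ
  have hGx : 0 < Real.Gamma (x + β) := Real.Gamma_pos_of_pos (by linarith)
  have hGy : 0 < Real.Gamma (y + β) := Real.Gamma_pos_of_pos (by linarith)
  have hxx : (0:ℝ) < x ^ x := Real.rpow_pos_of_pos hx x
  have hyy : (0:ℝ) < y ^ y := Real.rpow_pos_of_pos hy y
  have hP : (0:ℝ) < y ^ y / x ^ x := by positivity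
  have hQbase : (0:ℝ) < (x / y) ^ (α - β) := Real.rpow_pos_of_pos (by positivity) _
  have hQ : (0:ℝ) < (x / y) ^ (α - β) * (Real.Gamma (x + β) / Real.Gamma (y + β)) := by
    positivity
  have hL : (0:ℝ) < identricMean x y := by
    unfold identricMean
    have : (0:ℝ) < (y ^ y / x ^ x) ^ (1 / (y - x)) := Real.rpow_pos_of_pos hP _
    positivity
  have hR : (0:ℝ) < ((x / y) ^ (α - β) * (Real.Gamma (x + β) / Real.Gamma (y + β)))
      ^ (1 / (x - y)) := Real.rpow_pos_of_pos hQ _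
  -- reduce to logs
  rw [← Real.exp_log hL, ← Real.exp_log hR, Real.exp_lt_exp]
  have h1d : x - y ≠ 0 := sub_ne_zero.mpr hxy
  have h2d : y - x ≠ 0 := sub_ne_zero.mpr (Ne.symm hxy)
  have hlogL : Real.log (identricMean x y)
      = -1 + (1 / (y - x)) * (y * Real.log y - x * Real.log x) := by
    unfold identricMean
    have hlog1 : Real.log (1 / Real.exp 1) = -1 := by
      rw [one_div, Real.log_inv, Real.log_exp]
    rw [Real.log_mul (by positivity) (ne_of_gt (Real.rpow_pos_of_pos hP _)),
      Real.log_rpow hP, Real.log_div (ne_of_gt hyy) (ne_of_gt hxx),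
      Real.log_rpow hy, Real.log_rpow hx, hlog1]
    try ring
  have hlogR : Real.log (((x / y) ^ (α - β) * (Real.Gamma (x + β) / Real.Gamma (y + β)))
      ^ (1 / (x - y)))
      = (1 / (x - y)) * ((α - β) * (Real.log x - Real.log y)
          + (Real.log (Real.Gamma (x + β)) - Real.log (Real.Gamma (y + β)))) := by
    rw [Real.log_rpow hQ, Real.log_mul (ne_of_gt hQbase) (by positivity),
      Real.log_rpow (by positivity : (0:ℝ) < x / y),
      Real.log_div (ne_of_gt hGx) (ne_of_gt hGy),
      Real.log_div (ne_of_gt hx) (ne_of_gt hy)]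
  rw [hlogL, hlogR]
  rcases lt_or_gt_of_ne hxy with h | h
  · -- x < y
    have hd : (0:ℝ) < y - x := by linarith
    have hkey := key_beta hx h hβ
    have hB : 0 ≤ (α - β) * (Real.log y - Real.log x) := by
      have := Real.log_lt_log hx h
      nlinarith
    have e1 : (1 / (y - x)) * (y * Real.log y - x * Real.log x)
        = (y * Real.log y - x * Real.log x) / (y - x) := by ring
    have e2 : (1 / (x - y)) * ((α - β) * (Real.log x - Real.log y)
          + (Real.log (Real.Gamma (x + β)) - Real.log (Real.Gamma (y + β))))
        = ((α - β) * (Real.log y - Real.log x)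
          + (Real.log (Real.Gamma (y + β)) - Real.log (Real.Gamma (x + β)))) / (y - x) := by
      field_simp
      ring
    rw [e1, e2]
    rw [show (-1 : ℝ) + (y * Real.log y - x * Real.log x) / (y - x)
        = (y * Real.log y - x * Real.log x - (y - x)) / (y - x) by field_simp; ring]
    rw [div_lt_div_iff₀ hd hd]
    nlinarith
  · -- y < x
    have hd : (0:ℝ) < x - y := by linarith
    have hkey := key_beta hy h hβ
    have hB : 0 ≤ (α - β) * (Real.log x - Real.log y) := by
      have := Real.log_lt_log hy h
      nlinarith
    have e1 : (1 / (y - x)) * (y * Real.log y - x * Real.log x)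
        = (x * Real.log x - y * Real.log y) / (x - y) := by
      field_simp
      ring
    have e2 : (1 / (x - y)) * ((α - β) * (Real.log x - Real.log y)
          + (Real.log (Real.Gamma (x + β)) - Real.log (Real.Gamma (y + β))))
        = ((α - β) * (Real.log x - Real.log y)
          + (Real.log (Real.Gamma (x + β)) - Real.log (Real.Gamma (y + β)))) / (x - y) := by
      ring
    rw [e1, e2]
    rw [show (-1 : ℝ) + (x * Real.log x - y * Real.log y) / (x - y)
        = (x * Real.log x - y * Real.log y - (x - y)) / (x - y) by field_simp; ring]
    rw [div_lt_div_iff₀ hd hd]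
    nlinarith
end

section
/- If α ≥ β ≥ 1/2, then the function f_{α,β,-1}(x) = x^{x+β-α} / (e^x Γ(x+β)) is (strictly) decreasing on (0,∞); equivalently, for all y > x > 0 one has e^y Γ(y+β)/y^{y+β−α} > e^x Γ(x+β)/x^{x+β−α}. -/
open Real Set

namespace Stmt13Aux

noncomputable def L : ℝ → ℝ := Real.log ∘ Real.Gamma

lemma hderL {x : ℝ} (hx : 0 < x) : DifferentiableAt ℝ L x := by
  refine ((Real.differentiableAt_Gamma ?_).log (Real.Gamma_ne_zero ?_)) <;>
    exact fun m ↦ ne_of_gt (by have := Nat.cast_nonneg (α := ℝ) m; linarith)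

lemma L_rec {x : ℝ} (hx : 0 < x) : L (x + 1) = L x + Real.log x := by
  simp only [L, Function.comp_apply, Real.Gamma_add_one hx.ne',
    Real.log_mul hx.ne' (Real.Gamma_pos_of_pos hx).ne', add_comm]

lemma derivL_rec {x : ℝ} (hx : 0 < x) : deriv L (x + 1) = deriv L x + 1 / x := by
  rw [← deriv_comp_add_const, one_div, ← Real.deriv_log,
    ← deriv_add (hderL hx) (Real.differentiableAt_log hx.ne')]
  apply Filter.EventuallyEq.deriv_eq
  filter_upwards [eventually_gt_nhds hx] with t ht
  exact L_rec ht

lemma psi_le_log {x : ℝ} (hx : 0 < x) : deriv L x ≤ Real.log x := by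
  have h := Real.convexOn_log_Gamma.deriv_le_slope (mem_Ioi.mpr hx)
    (mem_Ioi.mpr (by linarith : (0:ℝ) < x + 1)) (by linarith) (hderL hx)
  rwa [slope_def_field, add_sub_cancel_left, div_one, show Real.log ∘ Real.Gamma = L from rfl,
    L_rec hx, add_sub_cancel_left] at h

lemma log_le_psi {x : ℝ} (hx : 1 < x) : Real.log (x - 1) ≤ deriv L x := by
  have hx1 : (0:ℝ) < x - 1 := by linarith
  have h := Real.convexOn_log_Gamma.slope_le_deriv (mem_Ioi.mpr hx1)
    (mem_Ioi.mpr (by linarith : (0:ℝ) < x)) (by linarith) (hderL (by linarith))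
  rw [slope_def_field, show Real.log ∘ Real.Gamma = L from rfl] at h
  have : L x = L (x - 1) + Real.log (x - 1) := by
    have := L_rec hx1; rwa [sub_add_cancel] at this
  rw [this] at h
  simpa using h

lemma psi_mono {x y : ℝ} (hx : 0 < x) (hxy : x ≤ y) : deriv L x ≤ deriv L y := by
  have := Real.convexOn_log_Gamma.monotoneOn_deriv
    (fun t ht => hderL ht) (mem_Ioi.mpr hx) (mem_Ioi.mpr (lt_of_lt_of_le hx hxy)) hxy
  exact this

/-- elementary: `exp x * (2 - x) < 2 + x` for `x ∈ (0,2)` -/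
lemma key_exp {x : ℝ} (hx : 0 < x) (hx2 : x < 2) : Real.exp x * (2 - x) < 2 + x := by
  set G : ℝ → ℝ := fun t => 2 + t - Real.exp t * (2 - t) with hG
  have hd : ∀ t : ℝ, HasDerivAt G (1 - Real.exp t * (1 - t)) t := by
    intro t
    have h1 : HasDerivAt (fun t : ℝ => Real.exp t * (2 - t))
        (Real.exp t * (2 - t) + Real.exp t * (-1)) t :=
      (Real.hasDerivAt_exp t).mul (((hasDerivAt_id t).const_sub 2))
    have h2 : HasDerivAt (fun t : ℝ => 2 + t) 1 t := by
      simpa using (hasDerivAt_id t).const_add 2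
    have := h2.sub h1
    exact this.congr_deriv (by ring)
  have hmono : StrictMonoOn G (Icc 0 2) := by
    apply strictMonoOn_of_deriv_pos (convex_Icc 0 2)
      (fun t _ => (hd t).continuousAt.continuousWithinAt)
    intro t ht
    rw [interior_Icc] at ht
    rw [(hd t).deriv]
    have : Real.exp t * (1 - t) < 1 := by
      rcases le_or_gt 1 t with h | h
      · calc Real.exp t * (1 - t) ≤ 0 := by
              apply mul_nonpos_of_nonneg_of_nonpos (Real.exp_pos t).le; linarith
          _ < 1 := one_pos
      · have h1 : 1 - t < Real.exp (-t) := by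
          have := Real.add_one_lt_exp (x := -t) (by intro h0; simp at h0; linarith [ht.1])
          linarith
        calc Real.exp t * (1 - t) < Real.exp t * Real.exp (-t) := by
              apply mul_lt_mul_of_pos_left h1 (Real.exp_pos t)
          _ = 1 := by rw [← Real.exp_add]; simp
    linarith
  have h0 : G 0 = 0 := by simp [hG]
  have := hmono (left_mem_Icc.mpr (by norm_num)) (⟨hx.le, hx2.le⟩ : x ∈ Icc (0:ℝ) 2) hx
  rw [h0] at this
  simp only [hG] at this
  linarith

/-- `1/s < log(s+1/2) - log(s-1/2)` for `s > 1/2` -/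
lemma c_pos {s : ℝ} (hs : 1 / 2 < s) : 1 / s < Real.log (s + 1/2) - Real.log (s - 1/2) := by
  have hs0 : 0 < s := by linarith
  have hsm : 0 < s - 1/2 := by linarith
  have hx : 0 < 1 / s := by positivity
  have hx2 : 1 / s < 2 := by
    rw [div_lt_iff₀ hs0]; linarith
  have key := key_exp hx hx2
  -- exp(1/s) * (2 - 1/s) < 2 + 1/s ; multiply by s/2
  have h2 : Real.exp (1/s) * (s - 1/2) < s + 1/2 := by
    have hmul := mul_lt_mul_of_pos_right key (half_pos hs0)
    have e1 : (2 + 1/s) * (s/2) = s + 1/2 := by field_simp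
    have e2 : Real.exp (1/s) * (2 - 1/s) * (s/2) = Real.exp (1/s) * (s - 1/2) := by
      field_simp
    rwa [e2, e1] at hmul
  have := Real.log_lt_log (by positivity) h2
  rw [Real.log_mul (Real.exp_ne_zero _) hsm.ne', Real.log_exp] at this
  linarith

noncomputable def d : ℝ → ℝ := fun t => deriv L t - Real.log (t - 1/2)

lemma d_step {s : ℝ} (hs : 1/2 < s) : d (s + 1) < d s := by
  have hs0 : 0 < s := by linarith
  have hc := c_pos hs
  simp only [d, derivL_rec hs0]
  have e1 : s + 1 - 1/2 = s + 1/2 := by ring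
  rw [e1]
  linarith

lemma d_shift {s : ℝ} (hs : 1/2 < s) (n : ℕ) : d (s + n) ≤ d s := by
  induction n with
  | zero => simp
  | succ n ih =>
    have h1 : d (s + n + 1) < d (s + n) := d_step (by have := Nat.cast_nonneg (α := ℝ) n; linarith)
    have e : s + (n + 1 : ℕ) = s + n + 1 := by push_cast; ring
    rw [e]
    linarith

lemma d_nonneg {u : ℝ} (hu : 1/2 < u) : 0 ≤ d u := by
  refine le_of_forall_pos_le_add fun ε hε => ?_
  obtain ⟨n, hn⟩ := exists_nat_gt (1 / (2 * ε) + 1 - u)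
  have hun1 : 1 / (2 * ε) < u + n - 1 := by linarith
  have hpos : (0:ℝ) < u + n - 1 := lt_trans (by positivity) hun1
  have h1 : 1 < u + n := by linarith
  -- lower bound d (u+n)
  have hlb : Real.log (u + n - 1) - Real.log (u + n - 1/2) ≤ d (u + n) := by
    have := log_le_psi h1
    have hmono' : Real.log (u + n - 1) ≤ deriv L (u + n) := this
    simp only [d]
    linarith
  -- log (u+n-1/2) - log (u+n-1) ≤ (1/2)/(u+n-1)
  have hlog : Real.log (u + n - 1/2) - Real.log (u + n - 1) ≤ (1/2) / (u + n - 1) := by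
    rw [← Real.log_div (by linarith) hpos.ne']
    have h := Real.log_le_sub_one_of_pos (x := (u + n - 1/2) / (u + n - 1)) (div_pos (by linarith) hpos)
    have e : (u + n - 1/2) / (u + n - 1) - 1 = (1/2) / (u + n - 1) := by
      field_simp; ring
    linarith [e ▸ h]
  have hsmall : (1/2) / (u + n - 1) < ε := by
    rw [div_lt_iff₀ hpos]
    rw [div_lt_iff₀ (by positivity : (0:ℝ) < 2 * ε)] at hun1
    linarith
  have := d_shift hu n
  linarith

lemma psi_gt {t : ℝ} (ht : 1/2 < t) : Real.log (t - 1/2) < deriv L t := by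
  have hc := c_pos ht
  have h1 : 0 ≤ d (t + 1) := d_nonneg (by linarith)
  have ht0 : 0 < t := by linarith
  have hrec := derivL_rec ht0
  simp only [d] at h1
  have e1 : t + 1 - 1/2 = t + 1/2 := by ring
  rw [hrec, e1] at h1
  linarith


section Main

variable {α β : ℝ}

noncomputable def g (α β : ℝ) : ℝ → ℝ :=
  fun x => (x + β - α) * Real.log x - x - L (x + β)

lemma hasDerivAt_g (hβ : 0 < β) {x : ℝ} (hx : 0 < x) :
    HasDerivAt (g α β)
      (1 * Real.log x + (x + β - α) * x⁻¹ - 1 - deriv L (x + β)) x := by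
  have hid : HasDerivAt (fun x : ℝ => x + β - α) 1 x := by
    simpa using ((hasDerivAt_id x).add_const β).sub_const α
  have h1 : HasDerivAt (fun x : ℝ => (x + β - α) * Real.log x)
      (1 * Real.log x + (x + β - α) * x⁻¹) x :=
    hid.mul (Real.hasDerivAt_log hx.ne')
  have h2 : HasDerivAt (fun x : ℝ => L (x + β)) (deriv L (x + β)) x :=
    (hderL (by linarith)).hasDerivAt.comp_add_const
  exact (h1.sub (hasDerivAt_id x)).sub h2

lemma deriv_g_neg (hβ : 1/2 ≤ β) (hαβ : β ≤ α) {x : ℝ} (hx : 0 < x) :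
    deriv (g α β) x < 0 := by
  have hβ0 : 0 < β := by linarith
  rw [(hasDerivAt_g hβ0 hx).deriv]
  have hmono : deriv L (x + 1/2) ≤ deriv L (x + β) :=
    psi_mono (by linarith) (by linarith)
  have hgt : Real.log x < deriv L (x + 1/2) := by
    have := psi_gt (t := x + 1/2) (by linarith)
    simpa using this
  have he : (x + β - α) * x⁻¹ = 1 + (β - α) * x⁻¹ := by
    field_simp
    ring
  have hnp : (β - α) * x⁻¹ ≤ 0 :=
    mul_nonpos_of_nonpos_of_nonneg (by linarith) (by positivity)
  rw [he]
  linarith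

lemma g_strictAntiOn (hβ : 1/2 ≤ β) (hαβ : β ≤ α) : StrictAntiOn (g α β) (Ioi 0) := by
  apply strictAntiOn_of_deriv_neg (convex_Ioi 0)
  · exact fun x hx => (hasDerivAt_g (by linarith) hx).continuousAt.continuousWithinAt
  · rw [interior_Ioi]
    exact fun x hx => deriv_g_neg hβ hαβ hx

lemma rep (hβ : 0 < β) {x : ℝ} (hx : 0 < x) :
    x ^ (x + β - α) / (Real.exp x * Real.Gamma (x + β)) = Real.exp (g α β x) := by
  have hΓ : 0 < Real.Gamma (x + β) := Real.Gamma_pos_of_pos (by linarith)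
  rw [Real.rpow_def_of_pos hx, show Real.Gamma (x + β) = Real.exp (L (x + β)) from
    (Real.exp_log hΓ).symm, ← Real.exp_add, ← Real.exp_sub]
  congr 1
  simp [g]
  ring

lemma rep2 (hβ : 0 < β) {x : ℝ} (hx : 0 < x) :
    Real.exp x * Real.Gamma (x + β) / x ^ (x + β - α) = Real.exp (-(g α β x)) := by
  rw [← inv_div, rep hβ hx, ← Real.exp_neg]

end Main

end Stmt13Aux

open Stmt13Aux in
theorem stmt_13 (α β : ℝ) (hβ : 1 / 2 ≤ β) (hαβ : β ≤ α) :
    StrictAntiOn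
      (fun x : ℝ => x ^ (x + β - α) / (Real.exp x * Real.Gamma (x + β))) (Set.Ioi 0) ∧
    ∀ x y : ℝ, 0 < x → x < y →
      Real.exp x * Real.Gamma (x + β) / x ^ (x + β - α)
        < Real.exp y * Real.Gamma (y + β) / y ^ (y + β - α) := by
  have hβ0 : 0 < β := by linarith
  have hb : (1:ℝ)/2 ≤ β := by linarith
  have hanti := g_strictAntiOn hb hαβ
  constructor
  · intro x hx y hy hxy
    simp only
    rw [rep hβ0 hx, rep hβ0 hy]
    exact Real.exp_lt_exp.2 (hanti hx hy hxy)
  · intro x y hx hxy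
    have hy : 0 < y := lt_trans hx hxy
    rw [rep2 hβ0 hx, rep2 hβ0 hy]
    exact Real.exp_lt_exp.2 (by linarith [hanti (mem_Ioi.mpr hx) (mem_Ioi.mpr hy) hxy])
end
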